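/- Let K be a simplicial complex and T ∈ K a face with |T| ≥ 2. The stellar subdivision Stellar(T, K) = (K \ st(T,K)) ∪ ({v_T} * ∂T * lk(T,K)), where v_T is a new vertex, is a simplicial complex. Moreover, for any u ∈ T, the vertices u and v_T in Stellar(T, K) satisfy the Link Condition lk(u, K') ∩ lk(v_T, K') = lk({u, v_T}, K') (where K' = Stellar(T,K)), and identifying v_T with u in K' recovers K. -/

import Mathlib

def IsComplex (K : Finset (Finset ℕ)) : Prop :=
  ∅ ∈ K ∧ ∀ s ∈ K, ∀ t ⊆ s, t ∈ K

/-- The (open) star `st(T,K) = {S ∈ K : T ⊆ S}`. -/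
def starC (T : Finset ℕ) (K : Finset (Finset ℕ)) : Finset (Finset ℕ) :=
  K.filter fun s => T ⊆ s

/-- The link `lk(T,K) = {S ∈ K : S ∩ T = ∅, S ∪ T ∈ K}`. -/
def linkC (T : Finset ℕ) (K : Finset (Finset ℕ)) : Finset (Finset ℕ) :=
  K.filter fun s => s ∩ T = ∅ ∧ s ∪ T ∈ K

/-- The boundary complex `∂T` of the simplex on `T`: all proper subsets of `T`. -/
def bdry (T : Finset ℕ) : Finset (Finset ℕ) := T.powerset.erase T

/-- The join of two complexes (on disjoint vertex sets). -/
def joinC (K L : Finset (Finset ℕ)) : Finset (Finset ℕ) :=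
  (K ×ˢ L).image fun p => p.1 ∪ p.2

/-- The stellar subdivision
`Stellar(T,K) = (K \ st(T,K)) ∪ ({v_T} * ∂T * lk(T,K))`, with `v` the new
vertex `v_T`. -/
def stellar (T : Finset ℕ) (K : Finset (Finset ℕ)) (v : ℕ) : Finset (Finset ℕ) :=
  (K \ starC T K) ∪ joinC (({v} : Finset ℕ).powerset) (joinC (bdry T) (linkC T K))

/-- Identifying vertex `a` with vertex `b` in a complex. -/
def identify (C : Finset (Finset ℕ)) (a b : ℕ) : Finset (Finset ℕ) :=
  C.image fun s => if a ∈ s then insert b (s.erase a) else s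

lemma mem_joinC {K L : Finset (Finset ℕ)} {s : Finset ℕ} :
    s ∈ joinC K L ↔ ∃ a ∈ K, ∃ b ∈ L, s = a ∪ b := by
  constructor
  · intro h
    simp only [joinC, Finset.mem_image, Finset.mem_product, Prod.exists] at h
    obtain ⟨a, b, ⟨ha, hb⟩, rfl⟩ := h
    exact ⟨a, ha, b, hb, rfl⟩
  · rintro ⟨a, ha, b, hb, rfl⟩
    simp only [joinC, Finset.mem_image, Finset.mem_product, Prod.exists]
    exact ⟨a, b, ⟨ha, hb⟩, rfl⟩

lemma mem_stellar_iff {K : Finset (Finset ℕ)} {T : Finset ℕ} {v : ℕ} {S : Finset ℕ} :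
    S ∈ stellar T K v ↔ (S ∈ K ∧ ¬ T ⊆ S) ∨
      ∃ A B, A ⊂ T ∧ B ∈ K ∧ B ∩ T = ∅ ∧ B ∪ T ∈ K ∧
        (S = A ∪ B ∨ S = insert v (A ∪ B)) := by
  simp only [stellar, Finset.mem_union, Finset.mem_sdiff, starC, Finset.mem_filter]
  constructor
  · rintro (⟨h1, h2⟩ | h)
    · exact Or.inl ⟨h1, fun hTS => h2 ⟨h1, hTS⟩⟩
    · right
      rw [mem_joinC] at h
      obtain ⟨p, hp, q, hq, rfl⟩ := h
      rw [mem_joinC] at hq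
      obtain ⟨A, hA, B, hB, rfl⟩ := hq
      simp only [bdry, Finset.mem_erase, Finset.mem_powerset] at hA
      simp only [linkC, Finset.mem_filter] at hB
      refine ⟨A, B, Finset.ssubset_iff_subset_ne.mpr ⟨hA.2, hA.1⟩, hB.1, hB.2.1, hB.2.2, ?_⟩
      rcases Finset.subset_singleton_iff.mp (Finset.mem_powerset.mp hp) with rfl | rfl
      · left; simp
      · right; simp [Finset.insert_eq, Finset.union_assoc, -Finset.singleton_union]
  · rintro (⟨h1, h2⟩ | ⟨A, B, hA, hB, hBT, hBTK, hS⟩)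
    · exact Or.inl ⟨h1, fun h => h2 h.2⟩
    · right
      rw [mem_joinC]
      have hq : A ∪ B ∈ joinC (bdry T) (linkC T K) := by
        rw [mem_joinC]
        exact ⟨A, by simp [bdry, hA.subset, hA.ne], B, by simp [linkC, hB, hBT, hBTK], rfl⟩
      rcases hS with rfl | rfl
      · exact ⟨∅, by simp, A ∪ B, hq, by simp⟩
      · exact ⟨{v}, by simp, A ∪ B, hq, by simp [Finset.insert_eq, -Finset.singleton_union]⟩

lemma sub_join {K : Finset (Finset ℕ)} {T A B t : Finset ℕ}
    (hK : IsComplex K) (hA : A ⊂ T) (hB : B ∈ K) (hBT : B ∩ T = ∅)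
    (hBTK : B ∪ T ∈ K) (ht : t ⊆ A ∪ B) :
    t ∩ T ⊂ T ∧ t \ T ∈ K ∧ (t \ T) ∩ T = ∅ ∧ (t \ T) ∪ T ∈ K ∧
      t = (t ∩ T) ∪ (t \ T) := by
  have h1 : t ∩ T ⊆ A := by
    intro x hx
    simp only [Finset.mem_inter] at hx
    rcases Finset.mem_union.mp (ht hx.1) with h | h
    · exact h
    · exact absurd (Finset.mem_inter.mpr ⟨h, hx.2⟩) (by simp [hBT])
  have h2 : t \ T ⊆ B := by
    intro x hx
    simp only [Finset.mem_sdiff] at hx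
    rcases Finset.mem_union.mp (ht hx.1) with h | h
    · exact absurd (hA.subset h) hx.2
    · exact h
  refine ⟨Finset.ssubset_of_subset_of_ssubset h1 hA, hK.2 B hB _ h2,
    Finset.sdiff_inter_self _ _,
    hK.2 _ hBTK _ (Finset.union_subset_union h2 (le_refl T)), ?_⟩
  ext x
  simp only [Finset.mem_union, Finset.mem_inter, Finset.mem_sdiff]
  tauto

lemma inter_singleton_empty {s : Finset ℕ} {a : ℕ} : s ∩ {a} = ∅ ↔ a ∉ s := by
  constructor
  · intro h ha
    have : a ∈ s ∩ {a} := Finset.mem_inter.mpr ⟨ha, Finset.mem_singleton_self a⟩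
    simp [h] at this
  · intro h
    ext x
    simp only [Finset.mem_inter, Finset.mem_singleton, Finset.notMem_empty, iff_false]
    rintro ⟨hx, rfl⟩; exact h hx

/-- for a face `T` of `K` with `|T| ≥ 2` and a new vertex
`v_T ∉ K`, the stellar subdivision `Stellar(T,K)` is a simplicial complex;
moreover for every `u ∈ T` the vertices `u` and `v_T` satisfy the Link
Condition `lk(u,K') ∩ lk(v_T,K') = lk({u,v_T},K')` in `K' = Stellar(T,K)`,
and identifying `v_T` with `u` in `K'` recovers `K`. -/
theorem stellar_isComplex_linkCondition_identify
    (K : Finset (Finset ℕ)) (T : Finset ℕ) (v : ℕ)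
    (hK : IsComplex K) (hT : T ∈ K) (hT2 : 2 ≤ T.card)
    (hv : ∀ s ∈ K, v ∉ s) :
    IsComplex (stellar T K v) ∧
    ∀ u ∈ T,
      linkC {u} (stellar T K v) ∩ linkC {v} (stellar T K v) =
        linkC {u, v} (stellar T K v) ∧
      identify (stellar T K v) v u = K := by
  have hvT : v ∉ T := hv T hT
  have hTne : ¬ T ⊆ (∅ : Finset ℕ) := by
    intro h
    have : T = ∅ := Finset.subset_empty.mp h
    rw [this] at hT2; simp at hT2
  have hcomplex : IsComplex (stellar T K v) := by
    constructor
    · exact mem_stellar_iff.mpr (Or.inl ⟨hK.1, hTne⟩)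
    · intro s hs t hts
      rcases mem_stellar_iff.mp hs with ⟨hsK, hns⟩ | ⟨A, B, hA, hB, hBT, hBTK, hcase⟩
      · exact mem_stellar_iff.mpr (Or.inl ⟨hK.2 s hsK t hts, fun h => hns (h.trans hts)⟩)
      · rcases hcase with rfl | rfl
        · obtain ⟨c1, c2, c3, c4, c5⟩ := sub_join hK hA hB hBT hBTK hts
          exact mem_stellar_iff.mpr (Or.inr ⟨t ∩ T, t \ T, c1, c2, c3, c4, Or.inl c5⟩)
        · by_cases hvt : v ∈ t
          · have ht' : t.erase v ⊆ A ∪ B := by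
              intro x hx
              have hx' := hts (Finset.mem_of_mem_erase hx)
              rcases Finset.mem_insert.mp hx' with rfl | h
              · exact absurd rfl (Finset.ne_of_mem_erase hx)
              · exact h
            obtain ⟨c1, c2, c3, c4, c5⟩ := sub_join hK hA hB hBT hBTK ht'
            refine mem_stellar_iff.mpr (Or.inr ⟨_, _, c1, c2, c3, c4, Or.inr ?_⟩)
            rw [← c5, Finset.insert_erase hvt]
          · have ht' : t ⊆ A ∪ B := by
              intro x hx
              rcases Finset.mem_insert.mp (hts hx) with rfl | h
              · exact absurd hx hvt
              · exact h
            obtain ⟨c1, c2, c3, c4, c5⟩ := sub_join hK hA hB hBT hBTK ht'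
            exact mem_stellar_iff.mpr (Or.inr ⟨_, _, c1, c2, c3, c4, Or.inl c5⟩)
  refine ⟨hcomplex, fun u hu => ?_⟩
  have huv : u ≠ v := fun h => hvT (h ▸ hu)
  constructor
  · -- link condition
    ext S
    simp only [Finset.mem_inter, linkC, Finset.mem_filter]
    constructor
    · rintro ⟨⟨hS, hSu, hSuK⟩, _, hSv, hSvK⟩
      have hu' : u ∉ S := inter_singleton_empty.mp hSu
      have hv' : v ∉ S := inter_singleton_empty.mp hSv
      -- analyze S ∪ {v}
      have hSv' := mem_stellar_iff.mp hSvK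
      rcases hSv' with ⟨h1, _⟩ | ⟨A, B, hA, hB, hBT, hBTK, hc⟩
      · exact absurd (Finset.mem_union_right S (Finset.mem_singleton_self v)) (hv _ h1)
      have hvA : v ∉ A := fun h => hvT (hA.subset h)
      have hvB : v ∉ B := hv B hB
      have hSAB : S = A ∪ B := by
        rcases hc with hc | hc
        · exfalso
          have : v ∈ A ∪ B := hc ▸ Finset.mem_union_right S (Finset.mem_singleton_self v)
          rcases Finset.mem_union.mp this with h | h
          · exact hvA h
          · exact hvB h
        · ext x
          constructor
          · intro hx
            have : x ∈ insert v (A ∪ B) := hc ▸ Finset.mem_union_left _ hx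
            rcases Finset.mem_insert.mp this with rfl | h
            · exact absurd hx hv'
            · exact h
          · intro hx
            have : x ∈ S ∪ {v} := by rw [hc]; exact Finset.mem_insert_of_mem hx
            rcases Finset.mem_union.mp this with h | h
            · exact h
            · exfalso
              rcases Finset.mem_singleton.mp h with rfl
              rcases Finset.mem_union.mp hx with h | h
              · exact hvA h
              · exact hvB h
      have hSK : S ∈ K := by
        refine hK.2 _ hBTK _ ?_
        rw [hSAB]
        exact Finset.union_subset (hA.subset.trans Finset.subset_union_right)
          Finset.subset_union_left
      have hSTK : S ∪ T ∈ K := by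
        have : S ∪ T = B ∪ T := by
          rw [hSAB]
          ext x
          simp only [Finset.mem_union]
          constructor
          · rintro ((h | h) | h)
            · exact Or.inr (hA.subset h)
            · exact Or.inl h
            · exact Or.inr h
          · rintro (h | h)
            · exact Or.inl (Or.inr h)
            · exact Or.inr h
        rw [this]; exact hBTK
      -- analyze S ∪ {u}
      have hvSu : v ∉ S ∪ {u} := by
        simp only [Finset.mem_union, Finset.mem_singleton]
        rintro (h | h)
        · exact hv' h
        · exact huv h.symm
      have hnT : ¬ T ⊆ S ∪ {u} := by
        rcases mem_stellar_iff.mp hSuK with ⟨_, h2⟩ | ⟨A₂, B₂, hA₂, hB₂, hBT₂, _, hc₂⟩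
        · exact h2
        · have hSu2 : S ∪ {u} = A₂ ∪ B₂ := by
            rcases hc₂ with h | h
            · exact h
            · exfalso
              exact hvSu (h ▸ Finset.mem_insert_self v _)
          intro hTsub
          have hTA : T ⊆ A₂ := by
            intro x hx
            rcases Finset.mem_union.mp (hSu2 ▸ hTsub hx) with h | h
            · exact h
            · exact absurd (Finset.mem_inter.mpr ⟨h, hx⟩) (by simp [hBT₂])
          exact (not_le_of_gt hA₂) hTA
      -- construct S ∪ {u,v}
      have hSuvK : S ∪ {u, v} ∈ stellar T K v := by
        refine mem_stellar_iff.mpr (Or.inr ⟨(S ∪ {u}) ∩ T, (S ∪ {u}) \ T, ?_, ?_, ?_, ?_, Or.inr ?_⟩)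
        · refine Finset.ssubset_iff_subset_ne.mpr ⟨Finset.inter_subset_right, fun h => hnT ?_⟩
          exact h ▸ Finset.inter_subset_left
        · refine hK.2 _ hSTK _ ?_
          refine Finset.sdiff_subset.trans ?_
          exact Finset.union_subset Finset.subset_union_left
            (Finset.singleton_subset_iff.mpr (Finset.mem_union_right S hu))
        · exact Finset.sdiff_inter_self _ _
        · have e1 : ((S ∪ {u}) \ T) ∪ T = S ∪ T := by
            rw [Finset.sdiff_union_self_eq_union]
            ext x
            simp only [Finset.mem_union, Finset.mem_singleton]
            constructor
            · rintro ((h | rfl) | h)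
              · exact Or.inl h
              · exact Or.inr hu
              · exact Or.inr h
            · rintro (h | h)
              · exact Or.inl (Or.inl h)
              · exact Or.inr h
          rw [e1]; exact hSTK
        · have e2 : ((S ∪ {u}) ∩ T) ∪ ((S ∪ {u}) \ T) = S ∪ {u} := by
            ext x
            simp only [Finset.mem_union, Finset.mem_inter, Finset.mem_sdiff]
            tauto
          rw [e2]
          ext x
          simp only [Finset.mem_union, Finset.mem_insert, Finset.mem_singleton]
          tauto
      refine ⟨hS, ?_, hSuvK⟩
      ext x
      simp only [Finset.mem_inter, Finset.mem_insert, Finset.mem_singleton,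
        Finset.notMem_empty, iff_false]
      rintro ⟨hx, rfl | rfl⟩
      · exact hu' hx
      · exact hv' hx
    · rintro ⟨hS, hSuv, hScup⟩
      have hu' : u ∉ S := by
        intro h
        have : u ∈ S ∩ {u, v} := Finset.mem_inter.mpr ⟨h, Finset.mem_insert_self u _⟩
        simp [hSuv] at this
      have hv' : v ∉ S := by
        intro h
        have : v ∈ S ∩ {u, v} :=
          Finset.mem_inter.mpr ⟨h, Finset.mem_insert_of_mem (Finset.mem_singleton_self v)⟩
        simp [hSuv] at this
      have hsub1 : S ∪ {u} ⊆ S ∪ {u, v} :=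
        Finset.union_subset_union (le_refl S)
          (Finset.singleton_subset_iff.mpr (Finset.mem_insert_self u _))
      have hsub2 : S ∪ {v} ⊆ S ∪ {u, v} :=
        Finset.union_subset_union (le_refl S)
          (Finset.singleton_subset_iff.mpr (Finset.mem_insert_of_mem (Finset.mem_singleton_self v)))
      exact ⟨⟨hS, inter_singleton_empty.mpr hu', hcomplex.2 _ hScup _ hsub1⟩,
        hS, inter_singleton_empty.mpr hv', hcomplex.2 _ hScup _ hsub2⟩
  · -- identify
    ext s
    simp only [identify, Finset.mem_image]
    constructor
    · rintro ⟨x, hx, rfl⟩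
      rcases mem_stellar_iff.mp hx with ⟨hxK, _⟩ | ⟨A, B, hA, hB, hBT, hBTK, hc⟩
      · rw [if_neg (hv x hxK)]; exact hxK
      · have hvA : v ∉ A := fun h => hvT (hA.subset h)
        have hvB : v ∉ B := hv B hB
        have hAB : A ∪ B ⊆ B ∪ T :=
          Finset.union_subset (hA.subset.trans Finset.subset_union_right)
            Finset.subset_union_left
        rcases hc with rfl | rfl
        · rw [if_neg (by simp [hvA, hvB])]
          exact hK.2 _ hBTK _ hAB
        · rw [if_pos (Finset.mem_insert_self _ _),
            Finset.erase_insert (by simp [hvA, hvB])]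
          refine hK.2 _ hBTK _ ?_
          intro x hx'
          rcases Finset.mem_insert.mp hx' with rfl | h
          · exact Finset.mem_union_right B hu
          · exact hAB h
    · intro hs
      by_cases hTs : T ⊆ s
      · have hvs : v ∉ s := hv s hs
        have hmem : insert v ((T.erase u) ∪ (s \ T)) ∈ stellar T K v := by
          refine mem_stellar_iff.mpr (Or.inr ⟨T.erase u, s \ T,
            Finset.erase_ssubset hu, hK.2 s hs _ Finset.sdiff_subset,
            Finset.sdiff_inter_self _ _, ?_, Or.inr rfl⟩)
          rw [Finset.sdiff_union_of_subset hTs]; exact hs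
        refine ⟨_, hmem, ?_⟩
        rw [if_pos (Finset.mem_insert_self _ _),
          Finset.erase_insert (by
            simp only [Finset.mem_union, Finset.mem_erase, Finset.mem_sdiff, not_or]
            exact ⟨fun h => hvT h.2, fun h => hvs h.1⟩)]
        rw [← Finset.insert_union, Finset.insert_erase hu]
        exact Finset.union_sdiff_of_subset hTs
      · exact ⟨s, mem_stellar_iff.mpr (Or.inl ⟨hs, hTs⟩), if_neg (hv s hs)⟩
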